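/- Let A, B be bounded linear operators on a complex Hilbert space H and r ≥ 1. Then ω^{2r}(B*A) ≤ (1/2)ω^r(|B|²|A|²) + (1/4)‖|A|^{4r} + |B|^{4r}‖, where ω is the numerical radius. -/

import Mathlib

set_option synthInstance.maxHeartbeats 1000000
set_option maxHeartbeats 1000000

open scoped InnerProductSpace

noncomputable def opAbs {H : Type*} [NormedAddCommGroup H] [InnerProductSpace ℂ H]
    [CompleteSpace H] (T : H →L[ℂ] H) : H →L[ℂ] H :=
  CFC.sqrt ((ContinuousLinearMap.adjoint T) * T)

noncomputable def numRadius {H : Type*} [NormedAddCommGroup H] [InnerProductSpace ℂ H]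
    (T : H →L[ℂ] H) : ℝ :=
  ⨆ x : {y : H // ‖y‖ = 1}, ‖⟪T (x : H), (x : H)⟫_ℂ‖

section Aux

open scoped NNReal

/-- tangent line inequality for rpow -/
lemma aux_tangent {r s t : ℝ} (hr : 1 ≤ r) (hs : 0 ≤ s) (ht : 0 ≤ t) :
    s ^ r + r * s ^ (r - 1) * (t - s) ≤ t ^ r := by
  rcases eq_or_lt_of_le hs with h0 | hs'
  · rcases eq_or_lt_of_le hr with h1 | hr'
    · simp [← h0, ← h1]
    · simp [← h0, Real.zero_rpow (by positivity : r ≠ 0),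
        Real.zero_rpow (by linarith : r - 1 ≠ 0), Real.rpow_nonneg ht]
  · have key := one_add_mul_self_le_rpow_one_add
      (s := t / s - 1) (by have := div_nonneg ht hs; linarith) hr
    rw [add_sub_cancel] at key
    have h2 := mul_le_mul_of_nonneg_left key (Real.rpow_nonneg hs r)
    calc s ^ r + r * s ^ (r - 1) * (t - s)
        = s ^ r * (1 + r * (t / s - 1)) := by
          rw [Real.rpow_sub hs', Real.rpow_one]
          field_simp
      _ ≤ s ^ r * (t / s) ^ r := h2
      _ = t ^ r := by
          rw [Real.div_rpow ht hs]
          field_simp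

lemma aux_half_rpow {u v r : ℝ} (hu : 0 ≤ u) (hv : 0 ≤ v) (hr : 1 ≤ r) :
    ((u + v) / 2) ^ r ≤ (u ^ r + v ^ r) / 2 := by
  have h := (convexOn_rpow hr).2 (Set.mem_Ici.mpr hu) (Set.mem_Ici.mpr hv)
    (by norm_num : (0:ℝ) ≤ 1/2) (by norm_num : (0:ℝ) ≤ 1/2) (by norm_num)
  simp only [smul_eq_mul] at h
  calc ((u + v) / 2) ^ r = ((1:ℝ)/2 * u + 1/2 * v) ^ r := by ring_nf
    _ ≤ 1/2 * u ^ r + 1/2 * v ^ r := h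
    _ = (u ^ r + v ^ r) / 2 := by ring

lemma aux_amgm {p q r : ℝ} (hp : 0 ≤ p) (hq : 0 ≤ q) (hr : 1 ≤ r) :
    p ^ r * q ^ r ≤ (p ^ (2 * r) + q ^ (2 * r)) / 2 := by
  have h1 : p ^ (2 * r) = (p ^ r) ^ 2 := by
    rw [show (2:ℝ) * r = r * ((2:ℕ):ℝ) by push_cast; ring, Real.rpow_mul hp,
      Real.rpow_natCast]
  have h2 : q ^ (2 * r) = (q ^ r) ^ 2 := by
    rw [show (2:ℝ) * r = r * ((2:ℕ):ℝ) by push_cast; ring, Real.rpow_mul hq,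
      Real.rpow_natCast]
  rw [h1, h2]
  nlinarith [sq_nonneg (p ^ r - q ^ r)]

variable {H : Type*} [NormedAddCommGroup H] [InnerProductSpace ℂ H]

/-- Buzano's inequality -/
lemma aux_buzano {e : H} (he : ‖e‖ = 1) (u v : H) :
    ‖⟪u, e⟫_ℂ * ⟪e, v⟫_ℂ‖ ≤ (‖u‖ * ‖v‖ + ‖⟪u, v⟫_ℂ‖) / 2 := by
  set c : ℂ := ⟪e, v⟫_ℂ with hc
  set w : H := (2 * c) • e - v with hw
  have hnw : ‖w‖ = ‖v‖ := by
    have h1 : ‖w‖ ^ 2 = ‖v‖ ^ 2 := by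
      rw [hw, @norm_sub_sq ℂ]
      rw [norm_smul, inner_smul_left]
      simp only [map_mul]
      rw [← hc]
      simp [he, mul_comm]
      rw [mul_pow, Complex.sq_norm, Complex.normSq_apply]
      ring
    nlinarith [norm_nonneg w, norm_nonneg v]
  have h2 : ⟪u, w⟫_ℂ = 2 * c * ⟪u, e⟫_ℂ - ⟪u, v⟫_ℂ := by
    rw [hw, inner_sub_right, inner_smul_right]
  have h3 : ‖⟪u, w⟫_ℂ‖ ≤ ‖u‖ * ‖v‖ := by
    calc ‖⟪u, w⟫_ℂ‖ ≤ ‖u‖ * ‖w‖ := norm_inner_le_norm u w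
      _ = ‖u‖ * ‖v‖ := by rw [hnw]
  have h4 : ‖2 * c * ⟪u, e⟫_ℂ‖ ≤ ‖u‖ * ‖v‖ + ‖⟪u, v⟫_ℂ‖ := by
    calc ‖2 * c * ⟪u, e⟫_ℂ‖ = ‖⟪u, w⟫_ℂ + ⟪u, v⟫_ℂ‖ := by rw [h2]; ring_nf
      _ ≤ ‖⟪u, w⟫_ℂ‖ + ‖⟪u, v⟫_ℂ‖ := norm_add_le _ _
      _ ≤ ‖u‖ * ‖v‖ + ‖⟪u, v⟫_ℂ‖ := by linarith
  have h5 : ‖2 * c * ⟪u, e⟫_ℂ‖ = 2 * ‖⟪u, e⟫_ℂ * c‖ := by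
    rw [norm_mul, norm_mul]
    simp [mul_comm, norm_mul]
    ring
  rw [← hc] at *
  linarith [h4, h5.symm.le]

variable [CompleteSpace H]

lemma aux_le_numRadius (T : H →L[ℂ] H) {x : H} (hx : ‖x‖ = 1) :
    ‖⟪T x, x⟫_ℂ‖ ≤ numRadius T := by
  refine le_ciSup_of_le ?_ (⟨x, hx⟩ : {y : H // ‖y‖ = 1}) le_rfl
  refine ⟨‖T‖, ?_⟩
  rintro y ⟨⟨z, hz⟩, rfl⟩
  calc ‖⟪T z, z⟫_ℂ‖ ≤ ‖T z‖ * ‖z‖ := norm_inner_le_norm _ _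
    _ ≤ (‖T‖ * ‖z‖) * ‖z‖ := by gcongr; exact T.le_opNorm z
    _ = ‖T‖ := by rw [hz]; ring

lemma aux_numRadius_nonneg (T : H →L[ℂ] H) : 0 ≤ numRadius T :=
  Real.iSup_nonneg fun _ => norm_nonneg _

lemma aux_rpow_eq_cfc_real (T : H →L[ℂ] H) (hT : 0 ≤ T) {r : ℝ} (hr : 0 < r) :
    CFC.rpow T r = cfc (fun t : ℝ => t ^ r) T := by
  rw [show CFC.rpow T r = cfc (fun x : ℝ≥0 => x ^ r) T from rfl, cfc_nnreal_eq_real (fun x : ℝ≥0 => x ^ r) T hT]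
  apply cfc_congr
  intro t ht
  have h0 : 0 ≤ t := spectrum_nonneg_of_nonneg hT ht
  simp [NNReal.coe_rpow, Real.coe_toNNReal t h0]

lemma aux_inner_re_mono {S S' : H →L[ℂ] H} (h : S ≤ S') (x : H) :
    RCLike.re ⟪S x, x⟫_ℂ ≤ RCLike.re ⟪S' x, x⟫_ℂ := by
  have h2 := ((ContinuousLinearMap.le_def S S').mp h).re_inner_nonneg_left x
  rw [ContinuousLinearMap.sub_apply, inner_sub_left, map_sub] at h2
  linarith

/-- Hölder–McCarthy inequality -/
lemma aux_mccarthy (T : H →L[ℂ] H) (hT : 0 ≤ T) {r : ℝ} (hr : 1 ≤ r) {x : H} (hx : ‖x‖ = 1) :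
    (RCLike.re ⟪T x, x⟫_ℂ) ^ r ≤ RCLike.re ⟪(CFC.rpow T r) x, x⟫_ℂ := by
  set s := RCLike.re ⟪T x, x⟫_ℂ with hsdef
  have hs : 0 ≤ s := ((ContinuousLinearMap.nonneg_iff_isPositive T).mp hT).re_inner_nonneg_left x
  have hTsa : IsSelfAdjoint T := .of_nonneg hT
  set c : ℝ := s ^ r - r * s ^ (r - 1) * s with hcdef
  set d : ℝ := r * s ^ (r - 1) with hddef
  have hrc : ContinuousOn (fun t : ℝ => t ^ r) (spectrum ℝ T) :=
    (Real.continuous_rpow_const (by linarith)).continuousOn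
  have hmono : cfc (fun t : ℝ => c + d * t) T ≤ cfc (fun t : ℝ => t ^ r) T := by
    refine cfc_mono (fun t ht => ?_) (by fun_prop) hrc
    have h0 : 0 ≤ t := spectrum_nonneg_of_nonneg hT ht
    have := aux_tangent hr hs h0
    nlinarith [this]
  have hlin : cfc (fun t : ℝ => c + d * t) T = algebraMap ℝ _ c + d • T := by
    rw [cfc_const_add c (fun t => d * t) T (by fun_prop) hTsa, cfc_const_mul_id d T hTsa]
  rw [hlin] at hmono
  have h1 := aux_inner_re_mono hmono x
  have h2 : RCLike.re ⟪(algebraMap ℝ (H →L[ℂ] H) c + d • T) x, x⟫_ℂ = c + d * s := by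
    rw [ContinuousLinearMap.add_apply, inner_add_left, map_add]
    have : (algebraMap ℝ (H →L[ℂ] H) c) x = (c : ℂ) • x := by
      simp [Algebra.algebraMap_eq_smul_one]
    rw [this, ContinuousLinearMap.smul_apply, RCLike.real_smul_eq_coe_smul (K := ℂ) d (T x),
      inner_smul_left, inner_smul_left]
    have hxx : ⟪x, x⟫_ℂ = 1 := by
      rw [inner_self_eq_norm_sq_to_K, hx]; norm_num
    simp [hxx, hsdef, hx]
  rw [h2] at h1
  rw [aux_rpow_eq_cfc_real T hT (by linarith)]
  calc s ^ r = c + d * s := by rw [hcdef, hddef]; ring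
    _ ≤ _ := h1

lemma aux_adj_mul_self_nonneg (A : H →L[ℂ] H) : 0 ≤ (ContinuousLinearMap.adjoint A) * A := by
  rw [← ContinuousLinearMap.star_eq_adjoint]
  exact star_mul_self_nonneg A

lemma aux_sq_nonneg {a : H →L[ℂ] H} (ha : 0 ≤ a) : 0 ≤ a ^ 2 := by
  have hsa : IsSelfAdjoint a := .of_nonneg ha
  rw [pow_two]
  nth_rewrite 1 [← hsa.star_eq]
  exact star_mul_self_nonneg a

lemma aux_opAbs_rpow (A : H →L[ℂ] H) {r : ℝ} (hr : 1 ≤ r) :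
    CFC.rpow (opAbs A) (4 * r) = CFC.rpow ((ContinuousLinearMap.adjoint A) * A) (2 * r) := by
  have ha := aux_adj_mul_self_nonneg A
  rw [opAbs, CFC.sqrt_eq_rpow]
  calc CFC.rpow (CFC.rpow _ (1/2 : ℝ)) (4 * r)
      = CFC.rpow _ ((1/2) * (4 * r)) :=
        CFC.rpow_rpow_of_exponent_nonneg _ _ _ (by norm_num) (by linarith) ha
    _ = _ := by congr 1; ring

lemma aux_rpow_sq (a : H →L[ℂ] H) (ha : 0 ≤ a) {r : ℝ} (hr : 1 ≤ r) :
    CFC.rpow (a ^ 2) r = CFC.rpow a (2 * r) := by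
  have h1 : a ^ 2 = CFC.rpow a ((2:ℕ):ℝ) := (CFC.rpow_natCast a 2 ha).symm
  calc CFC.rpow (a ^ 2) r = CFC.rpow (CFC.rpow a ((2:ℕ):ℝ)) r := by rw [h1]
    _ = CFC.rpow a (((2:ℕ):ℝ) * r) :=
        CFC.rpow_rpow_of_exponent_nonneg a _ r (by norm_num) (by linarith) ha
    _ = CFC.rpow a (2 * r) := by norm_num

/-- `‖a x‖ ^ 2 = re ⟪(a ^ 2) x, x⟫` for selfadjoint `a`. -/
lemma aux_norm_sq (a : H →L[ℂ] H) (hsa : IsSelfAdjoint a) (x : H) :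
    ‖a x‖ ^ 2 = RCLike.re ⟪(a ^ 2) x, x⟫_ℂ := by
  have : (a ^ 2) x = a (a x) := by rw [pow_two]; rfl
  rw [this]
  nth_rewrite 2 [← hsa.adjoint_eq]
  rw [ContinuousLinearMap.adjoint_inner_left, inner_self_eq_norm_sq]

end Aux

theorem stmt_14 {H : Type*} [NormedAddCommGroup H] [InnerProductSpace ℂ H] [CompleteSpace H]
    (A B : H →L[ℂ] H) (r : ℝ) (hr : 1 ≤ r) :
    numRadius ((ContinuousLinearMap.adjoint B) * A) ^ (2 * r) ≤
      (1 / 2) * numRadius (((ContinuousLinearMap.adjoint B) * B) *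
          ((ContinuousLinearMap.adjoint A) * A)) ^ r +
        (1 / 4) * ‖CFC.rpow (opAbs A) (4 * r) + CFC.rpow (opAbs B) (4 * r)‖ := by
  set a := (ContinuousLinearMap.adjoint A) * A with hadef
  set b := (ContinuousLinearMap.adjoint B) * B with hbdef
  have ha : 0 ≤ a := aux_adj_mul_self_nonneg A
  have hb : 0 ≤ b := aux_adj_mul_self_nonneg B
  have hasa : IsSelfAdjoint a := .of_nonneg ha
  have hbsa : IsSelfAdjoint b := .of_nonneg hb
  set P := CFC.rpow (opAbs A) (4 * r) with hPdef
  set Q := CFC.rpow (opAbs B) (4 * r) with hQdef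
  set N := numRadius (b * a) with hNdef
  set K := ‖P + Q‖ with hKdef
  have hN0 : 0 ≤ N := aux_numRadius_nonneg _
  have hK0 : 0 ≤ K := norm_nonneg _
  set C : ℝ := (1/2) * N ^ r + (1/4) * K with hCdef
  have hC0 : 0 ≤ C := by
    have := Real.rpow_nonneg hN0 r
    positivity
  have h2r : (0:ℝ) < 2 * r := by linarith
  -- the key pointwise estimate
  have key : ∀ x : H, ‖x‖ = 1 →
      ‖⟪((ContinuousLinearMap.adjoint B) * A) x, x⟫_ℂ‖ ^ (2 * r) ≤ C := by
    intro x hx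
    set f := ‖⟪((ContinuousLinearMap.adjoint B) * A) x, x⟫_ℂ‖ with hfdef
    have hf0 : 0 ≤ f := norm_nonneg _
    have hfAB : f = ‖⟪A x, B x⟫_ℂ‖ := by
      rw [hfdef, ContinuousLinearMap.mul_apply, ContinuousLinearMap.adjoint_inner_left]
    set α := RCLike.re ⟪a x, x⟫_ℂ with hαdef
    set β := RCLike.re ⟪b x, x⟫_ℂ with hβdef
    have hα : α = ‖A x‖ ^ 2 := by
      rw [hαdef, hadef, ContinuousLinearMap.mul_apply,
        ContinuousLinearMap.adjoint_inner_left, inner_self_eq_norm_sq]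
    have hβ : β = ‖B x‖ ^ 2 := by
      rw [hβdef, hbdef, ContinuousLinearMap.mul_apply,
        ContinuousLinearMap.adjoint_inner_left, inner_self_eq_norm_sq]
    have hα0 : 0 ≤ α := by rw [hα]; positivity
    have hβ0 : 0 ≤ β := by rw [hβ]; positivity
    -- Step 1: f ^ 2 ≤ α * β
    have step1 : f ^ 2 ≤ α * β := by
      rw [hα, hβ, hfAB]
      calc ‖⟪A x, B x⟫_ℂ‖ ^ 2 ≤ (‖A x‖ * ‖B x‖) ^ 2 := by
            gcongr
            exact norm_inner_le_norm _ _
        _ = ‖A x‖ ^ 2 * (‖B x‖ ^ 2) := by ring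
    -- Step 2: Buzano
    set u := ‖a x‖ * ‖b x‖ with hudef
    set m := ‖⟪(b * a) x, x⟫_ℂ‖ with hmdef
    have hu0 : 0 ≤ u := by positivity
    have hm0 : 0 ≤ m := norm_nonneg _
    have step2 : α * β ≤ (u + m) / 2 := by
      have hab : ⟪(b * a) x, x⟫_ℂ = ⟪a x, b x⟫_ℂ := by
        rw [ContinuousLinearMap.mul_apply]
        nth_rewrite 1 [← hbsa.adjoint_eq]
        rw [ContinuousLinearMap.adjoint_inner_left]
      have h1 : α * β ≤ ‖⟪a x, x⟫_ℂ‖ * ‖⟪x, b x⟫_ℂ‖ := by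
        have e1 : α ≤ ‖⟪a x, x⟫_ℂ‖ := RCLike.re_le_norm _
        have e2 : β ≤ ‖⟪x, b x⟫_ℂ‖ := by
          rw [hβdef, inner_re_symm]
          exact RCLike.re_le_norm _
        exact mul_le_mul e1 e2 hβ0 (le_trans hα0 e1)
      have h2 := aux_buzano hx (a x) (b x)
      rw [← norm_mul] at h1
      rw [← hab] at h2
      calc α * β ≤ ‖⟪a x, x⟫_ℂ * ⟪x, b x⟫_ℂ‖ := h1
        _ ≤ (‖a x‖ * ‖b x‖ + ‖⟪(b * a) x, x⟫_ℂ‖) / 2 := h2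
        _ = (u + m) / 2 := rfl
    -- Step 6 ingredients: McCarthy bounds
    have hPa : CFC.rpow (a ^ 2) r = P := by
      rw [aux_rpow_sq a ha hr, hPdef, aux_opAbs_rpow A hr]
    have hQb : CFC.rpow (b ^ 2) r = Q := by
      rw [aux_rpow_sq b hb hr, hQdef, aux_opAbs_rpow B hr]
    have hmcA : ‖a x‖ ^ (2 * r) ≤ RCLike.re ⟪P x, x⟫_ℂ := by
      have h1 : ‖a x‖ ^ (2 * r) = (‖a x‖ ^ 2) ^ r := by
        rw [show (2:ℝ) * r = ((2:ℕ):ℝ) * r by norm_num,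
          Real.rpow_natCast_mul (norm_nonneg _)]
      rw [h1, aux_norm_sq a hasa x, ← hPa]
      exact aux_mccarthy (a ^ 2) (aux_sq_nonneg ha) hr hx
    have hmcB : ‖b x‖ ^ (2 * r) ≤ RCLike.re ⟪Q x, x⟫_ℂ := by
      have h1 : ‖b x‖ ^ (2 * r) = (‖b x‖ ^ 2) ^ r := by
        rw [show (2:ℝ) * r = ((2:ℕ):ℝ) * r by norm_num,
          Real.rpow_natCast_mul (norm_nonneg _)]
      rw [h1, aux_norm_sq b hbsa x, ← hQb]
      exact aux_mccarthy (b ^ 2) (aux_sq_nonneg hb) hr hx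
    -- Step 7: sum bound by K
    have step7 : RCLike.re ⟪P x, x⟫_ℂ + RCLike.re ⟪Q x, x⟫_ℂ ≤ K := by
      have h1 : RCLike.re ⟪P x, x⟫_ℂ + RCLike.re ⟪Q x, x⟫_ℂ
          = RCLike.re ⟪(P + Q) x, x⟫_ℂ := by
        rw [ContinuousLinearMap.add_apply, inner_add_left, map_add]
      rw [h1]
      calc RCLike.re ⟪(P + Q) x, x⟫_ℂ ≤ ‖⟪(P + Q) x, x⟫_ℂ‖ := RCLike.re_le_norm _
        _ ≤ ‖(P + Q) x‖ * ‖x‖ := norm_inner_le_norm _ _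
        _ ≤ (‖P + Q‖ * ‖x‖) * ‖x‖ := by gcongr; exact (P + Q).le_opNorm x
        _ = K := by rw [hx, hKdef]; ring
    -- Step 5: u ^ r ≤ K / 2
    have step5 : u ^ r ≤ K / 2 := by
      have h1 : u ^ r = ‖a x‖ ^ r * ‖b x‖ ^ r :=
        Real.mul_rpow (norm_nonneg _) (norm_nonneg _)
      have h2 := aux_amgm (norm_nonneg (a x)) (norm_nonneg (b x)) hr
      rw [h1]
      calc ‖a x‖ ^ r * ‖b x‖ ^ r ≤ (‖a x‖ ^ (2*r) + ‖b x‖ ^ (2*r)) / 2 := h2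
        _ ≤ (RCLike.re ⟪P x, x⟫_ℂ + RCLike.re ⟪Q x, x⟫_ℂ) / 2 := by linarith
        _ ≤ K / 2 := by linarith
    -- Step 8: m ^ r ≤ N ^ r
    have step8 : m ^ r ≤ N ^ r :=
      Real.rpow_le_rpow hm0 (aux_le_numRadius _ hx) (by linarith)
    -- combine
    have hsplit : f ^ (2 * r) = (f ^ 2) ^ r := by
      rw [show (2:ℝ) * r = ((2:ℕ):ℝ) * r by norm_num, Real.rpow_natCast_mul hf0]
    have hmono : (f ^ 2) ^ r ≤ ((u + m) / 2) ^ r :=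
      Real.rpow_le_rpow (by positivity) (le_trans step1 step2) (by linarith)
    have hhalf : ((u + m) / 2) ^ r ≤ (u ^ r + m ^ r) / 2 := aux_half_rpow hu0 hm0 hr
    calc f ^ (2 * r) = (f ^ 2) ^ r := hsplit
      _ ≤ ((u + m) / 2) ^ r := hmono
      _ ≤ (u ^ r + m ^ r) / 2 := hhalf
      _ ≤ (K / 2 + N ^ r) / 2 := by linarith
      _ = C := by rw [hCdef]; ring
  -- conclude from the pointwise estimate
  have hbound : numRadius ((ContinuousLinearMap.adjoint B) * A) ≤ C ^ (1 / (2 * r)) := by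
    apply Real.iSup_le _ (by positivity)
    rintro ⟨x, hx⟩
    have h := key x hx
    have hf0 : (0:ℝ) ≤ ‖⟪((ContinuousLinearMap.adjoint B) * A) x, x⟫_ℂ‖ := norm_nonneg _
    calc ‖⟪((ContinuousLinearMap.adjoint B) * A) x, x⟫_ℂ‖
        = (‖⟪((ContinuousLinearMap.adjoint B) * A) x, x⟫_ℂ‖ ^ (2*r)) ^ (1/(2*r)) := by
          rw [← Real.rpow_mul hf0]
          rw [mul_one_div, div_self (ne_of_gt h2r), Real.rpow_one]
      _ ≤ C ^ (1 / (2 * r)) := Real.rpow_le_rpow (by positivity) h (by positivity)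
  calc numRadius ((ContinuousLinearMap.adjoint B) * A) ^ (2 * r)
      ≤ (C ^ (1 / (2 * r))) ^ (2 * r) :=
        Real.rpow_le_rpow (aux_numRadius_nonneg _) hbound h2r.le
    _ = C := by
        rw [← Real.rpow_mul hC0, one_div, inv_mul_cancel₀ (ne_of_gt h2r), Real.rpow_one]
    _ = _ := by rw [hCdef]
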